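/- For every twice continuously differentiable function f : ℝ → ℂ and every x ∈ ℝ, f(x) = J[D₁(D₂ f)](x) + c₀⁻¹ f(0) Y₀(x) + c₁⁻¹ f'(0) Y₁(x). -/

import Mathlib

noncomputable section

/-- `sech x = 1 / cosh x`. -/
def sech (x : ℝ) : ℝ := 1 / Real.cosh x

/-- `Y₀(x) = √(3/4) sech² x`. -/
def Y0 (x : ℝ) : ℝ := Real.sqrt (3 / 4) * sech x ^ 2

/-- `Y₁(x) = √(3/2) sech x tanh x`. -/
def Y1 (x : ℝ) : ℝ := Real.sqrt (3 / 2) * sech x * Real.tanh x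

/-- `D₁ f = f' + tanh · f`. -/
def D1 (f : ℝ → ℂ) (x : ℝ) : ℂ := deriv f x + (Real.tanh x : ℂ) * f x

/-- `D₂ f = f' + 2 tanh · f`. -/
def D2 (f : ℝ → ℂ) (x : ℝ) : ℂ := deriv f x + 2 * (Real.tanh x : ℂ) * f x

/-- `I₁[g](x) = sech x ∫₀ˣ cosh y · g(y) dy`. -/
def I1op (g : ℝ → ℂ) (x : ℝ) : ℂ := (sech x : ℂ) * ∫ y in (0 : ℝ)..x, (Real.cosh y : ℂ) * g y

/-- `I₂[g](x) = sech² x ∫₀ˣ cosh² y · g(y) dy`. -/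
def I2op (g : ℝ → ℂ) (x : ℝ) : ℂ :=
  (sech x : ℂ) ^ 2 * ∫ y in (0 : ℝ)..x, (Real.cosh y : ℂ) ^ 2 * g y

/-- `J[g] = I₂[I₁[g]]`. -/
def Jop (g : ℝ → ℂ) : ℝ → ℂ := I2op (I1op g)

lemma coshC_ne (x : ℝ) : (Real.cosh x : ℂ) ≠ 0 := by
  exact_mod_cast (Real.cosh_pos x).ne'

lemma coshC_ne' (x : ℝ) : Complex.cosh (x : ℂ) ≠ 0 := by
  rw [← Complex.ofReal_cosh]; exact coshC_ne x

lemma hasDerivAt_coshC (x : ℝ) :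
    HasDerivAt (fun y : ℝ => (Real.cosh y : ℂ)) (Real.sinh x : ℂ) x :=
  (Real.hasDerivAt_cosh x).ofReal_comp

lemma contDiff_tanhC : ContDiff ℝ 1 (fun y : ℝ => (Real.tanh y : ℂ)) := by
  have h : ContDiff ℝ 1 Real.tanh := by
    have : Real.tanh = fun x => Real.sinh x / Real.cosh x := by
      funext x; exact Real.tanh_eq_sinh_div_cosh x
    rw [this]
    exact Real.contDiff_sinh.div Real.contDiff_cosh fun x => (Real.cosh_pos x).ne'
  exact Complex.ofRealCLM.contDiff.comp h

/-- The representation formula `f = J[D₁ D₂ f] + c₀⁻¹ f(0) Y₀ + c₁⁻¹ f'(0) Y₁`. -/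
theorem representation_formula (f : ℝ → ℂ) (hf : ContDiff ℝ 2 f) (x : ℝ) :
    f x = Jop (D1 (D2 f)) x + (Real.sqrt (3 / 4) : ℂ)⁻¹ * f 0 * (Y0 x : ℂ)
        + (Real.sqrt (3 / 2) : ℂ)⁻¹ * deriv f 0 * (Y1 x : ℂ) := by
  have hf1 : ContDiff ℝ 1 f := hf.of_le (by norm_num)
  have hfd : Differentiable ℝ f := hf1.differentiable one_ne_zero
  have hdf : ContDiff ℝ 1 (deriv f) := by
    have := (contDiff_succ_iff_deriv (n := 1)).mp (by exact_mod_cast hf)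
    exact this.2.2
  have hg : ContDiff ℝ 1 (D2 f) := by
    have : D2 f = fun y => deriv f y + 2 * (Real.tanh y : ℂ) * f y := rfl
    rw [this]
    exact hdf.add (((contDiff_const.mul contDiff_tanhC)).mul hf1)
  have hgd : Differentiable ℝ (D2 f) := hg.differentiable one_ne_zero
  -- Step A : inner FTC
  have hA : ∀ y : ℝ, HasDerivAt (fun z : ℝ => (Real.cosh z : ℂ) * D2 f z)
      ((Real.cosh y : ℂ) * D1 (D2 f) y) y := by
    intro y
    have h := (hasDerivAt_coshC y).mul (hgd y).hasDerivAt
    refine h.congr_deriv ?_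
    have ht : (Real.tanh y : ℂ) = (Real.sinh y : ℂ) / (Real.cosh y : ℂ) := by
      rw [Real.tanh_eq_sinh_div_cosh, Complex.ofReal_div]
    simp only [D1, ht]
    push_cast
    field_simp [coshC_ne' y]
    ring
  have hcontD1 : Continuous (fun y => (Real.cosh y : ℂ) * D1 (D2 f) y) := by
    have hderivg : Continuous (deriv (D2 f)) := hg.continuous_deriv le_rfl
    have : Continuous (D1 (D2 f)) := by
      have : D1 (D2 f) = fun y => deriv (D2 f) y + (Real.tanh y : ℂ) * D2 f y := rfl
      rw [this]
      exact hderivg.add ((contDiff_tanhC.continuous).mul hg.continuous)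
    exact (Complex.continuous_ofReal.comp Real.continuous_cosh).mul this
  have hI1 : ∀ y : ℝ, I1op (D1 (D2 f)) y = D2 f y - D2 f 0 * (sech y : ℂ) := by
    intro y
    have hint : ∫ z in (0:ℝ)..y, (Real.cosh z : ℂ) * D1 (D2 f) z
        = (Real.cosh y : ℂ) * D2 f y - (Real.cosh 0 : ℂ) * D2 f 0 := by
      exact intervalIntegral.integral_eq_sub_of_hasDerivAt (fun z _ => hA z)
        (hcontD1.intervalIntegrable 0 y)
    simp only [I1op, hint, Real.cosh_zero, sech]
    push_cast
    field_simp [coshC_ne' y]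
  -- Step B : outer FTC
  have hB : ∀ y : ℝ, HasDerivAt (fun z : ℝ => (Real.cosh z : ℂ) ^ 2 * f z)
      ((Real.cosh y : ℂ) ^ 2 * D2 f y) y := by
    intro y
    have hc2 : HasDerivAt (fun z : ℝ => (Real.cosh z : ℂ) ^ 2)
        (2 * (Real.cosh y : ℂ) * (Real.sinh y : ℂ)) y := by
      have h := (hasDerivAt_coshC y).mul (hasDerivAt_coshC y)
      have h2 : HasDerivAt (fun z : ℝ => (Real.cosh z : ℂ) ^ 2)
          ((Real.sinh y : ℂ) * (Real.cosh y : ℂ) + (Real.cosh y : ℂ) * (Real.sinh y : ℂ)) y := by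
        simp only [pow_two]; exact h
      convert h2 using 1
      ring
    have h := hc2.mul (hfd y).hasDerivAt
    refine h.congr_deriv ?_
    have ht : (Real.tanh y : ℂ) = (Real.sinh y : ℂ) / (Real.cosh y : ℂ) := by
      rw [Real.tanh_eq_sinh_div_cosh, Complex.ofReal_div]
    simp only [D2, ht]
    push_cast
    field_simp [coshC_ne' y]
    ring
  have hconti : Continuous (fun y => (Real.cosh y : ℂ) ^ 2 * D2 f y) :=
    ((Complex.continuous_ofReal.comp Real.continuous_cosh).pow 2).mul hg.continuous
  have hcontc : Continuous (fun y : ℝ => (Real.cosh y : ℂ)) :=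
    Complex.continuous_ofReal.comp Real.continuous_cosh
  have hJ : Jop (D1 (D2 f)) x
      = (sech x : ℂ) ^ 2 * ((Real.cosh x : ℂ) ^ 2 * f x - f 0 - D2 f 0 * Real.sinh x) := by
    have hre : (fun y => (Real.cosh y : ℂ) ^ 2 * I1op (D1 (D2 f)) y)
        = fun y => (Real.cosh y : ℂ) ^ 2 * D2 f y - D2 f 0 * (Real.cosh y : ℂ) := by
      funext y
      rw [hI1 y]
      simp only [sech]
      push_cast
      field_simp [coshC_ne' y]
    have hint1 : ∫ y in (0:ℝ)..x, (Real.cosh y : ℂ) ^ 2 * D2 f y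
        = (Real.cosh x : ℂ) ^ 2 * f x - (Real.cosh 0 : ℂ) ^ 2 * f 0 :=
      intervalIntegral.integral_eq_sub_of_hasDerivAt (fun z _ => hB z)
        (hconti.intervalIntegrable 0 x)
    have hint2 : ∫ y in (0:ℝ)..x, (Real.cosh y : ℂ) = (Real.sinh x : ℂ) := by
      have h := intervalIntegral.integral_eq_sub_of_hasDerivAt
        (f := fun z : ℝ => (Real.sinh z : ℂ)) (f' := fun z : ℝ => (Real.cosh z : ℂ))
        (a := (0:ℝ)) (b := x)
        (fun z _ => (Real.hasDerivAt_sinh z).ofReal_comp)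
        ((Complex.continuous_ofReal.comp Real.continuous_cosh).intervalIntegrable 0 x)
      simpa using h
    simp only [Jop, I2op, hre]
    rw [intervalIntegral.integral_sub (hconti.intervalIntegrable 0 x)
      ((hcontc.intervalIntegrable 0 x).const_mul _),
      intervalIntegral.integral_const_mul, hint1, hint2]
    simp [Real.cosh_zero]
  have hD2f0 : D2 f 0 = deriv f 0 := by simp [D2, Real.tanh_zero]
  have hs4 : (Real.sqrt (3/4) : ℂ) ≠ 0 := by
    exact_mod_cast (Real.sqrt_pos.mpr (by norm_num)).ne'
  have hs2 : (Real.sqrt (3/2) : ℂ) ≠ 0 := by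
    exact_mod_cast (Real.sqrt_pos.mpr (by norm_num)).ne'
  have e0 : (Real.sqrt (3 / 4) : ℂ)⁻¹ * f 0 * (Y0 x : ℂ)
      = f 0 * ((sech x : ℝ) : ℂ) ^ 2 := by
    have hc : (Real.sqrt (3/4) : ℂ)⁻¹ * (Real.sqrt (3/4) : ℂ) = 1 := inv_mul_cancel₀ hs4
    simp only [Y0, Complex.ofReal_mul, Complex.ofReal_pow]
    linear_combination (f 0 * ((sech x : ℝ) : ℂ) ^ 2) * hc
  have e1 : (Real.sqrt (3 / 2) : ℂ)⁻¹ * deriv f 0 * (Y1 x : ℂ)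
      = deriv f 0 * ((sech x : ℝ) : ℂ) * ((Real.tanh x : ℝ) : ℂ) := by
    have hc : (Real.sqrt (3/2) : ℂ)⁻¹ * (Real.sqrt (3/2) : ℂ) = 1 := inv_mul_cancel₀ hs2
    simp only [Y1, Complex.ofReal_mul]
    linear_combination (deriv f 0 * ((sech x : ℝ) : ℂ) * ((Real.tanh x : ℝ) : ℂ)) * hc
  rw [hJ, hD2f0, e0, e1]
  have htC : ((Real.tanh x : ℝ) : ℂ) = (Real.sinh x : ℂ) / (Real.cosh x : ℂ) := by
    rw [Real.tanh_eq_sinh_div_cosh, Complex.ofReal_div]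
  simp only [sech, Complex.ofReal_div, Complex.ofReal_one, htC]
  field_simp [coshC_ne x, coshC_ne' x]
  ring
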